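/- The Artin group A(2n) = ⟨x, y | (xy)^n = (yx)^n⟩ with n ≥ 2 is isomorphic to the group with presentation ⟨y_0, …, y_{n−1}, t | t⁻¹ y_i t = φ(y_i), i = 0, …, n−1⟩, where φ(y_0) = y_0 y_1 ⋯ y_{n−2} y_{n−1} y_{n−2}⁻¹ ⋯ y_1⁻¹ y_0⁻¹ and φ(y_i) = y_{i−1} for 1 ≤ i ≤ n−1, via the map sending x ↦ t and y ↦ y_0. -/

import Mathlib

/-- Relations of the Artin group `A(2n) = ⟨x, y | (xy)^n = (yx)^n⟩`,
with `true ↦ x` and `false ↦ y`. -/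
def artinRels (n : ℕ) : Set (FreeGroup Bool) :=
  {(FreeGroup.of true * FreeGroup.of false) ^ n *
    ((FreeGroup.of false * FreeGroup.of true) ^ n)⁻¹}

/-- The word `φ(y_i)`:  `φ(y_0) = y_0 ⋯ y_{n-2} y_{n-1} y_{n-2}⁻¹ ⋯ y_0⁻¹` and
`φ(y_i) = y_{i-1}` for `i ≥ 1`; here `none ↦ t` and `some i ↦ y_i`. -/
def phiWord (n : ℕ) (hn : 2 ≤ n) (i : Fin n) : FreeGroup (Option (Fin n)) :=
  if (i : ℕ) = 0 then
    (((List.finRange (n - 1)).map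
        (fun j => FreeGroup.of (some (Fin.castLE (Nat.sub_le n 1) j)))).prod) *
      FreeGroup.of (some ⟨n - 1, by omega⟩) *
    (((List.finRange (n - 1)).map
        (fun j => FreeGroup.of (some (Fin.castLE (Nat.sub_le n 1) j)))).prod)⁻¹
  else FreeGroup.of (some ⟨(i : ℕ) - 1, lt_of_le_of_lt (Nat.sub_le _ _) i.isLt⟩)

/-- Relations `t⁻¹ y_i t = φ(y_i)`. -/
def mappingTorusRels (n : ℕ) (hn : 2 ≤ n) : Set (FreeGroup (Option (Fin n))) :=
  ⋃ i : Fin n,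
    {(FreeGroup.of none)⁻¹ * FreeGroup.of (some i) * FreeGroup.of none *
      (phiWord n hn i)⁻¹}

section Aux

variable {G : Type*} [Group G]

lemma aux_semiconj (a b : G) (m : ℕ) : a * (b * a) ^ m = (a * b) ^ m * a :=
  SemiconjBy.pow_right (by simp [SemiconjBy, mul_assoc]) m

lemma prod_conj_pow (a b : G) (m : ℕ) :
    (List.ofFn (fun j : Fin m => a ^ (j : ℕ) * b * (a ^ (j : ℕ))⁻¹)).prod
      = (b * a) ^ m * (a ^ m)⁻¹ := by
  induction m with
  | zero => simp
  | succ m ih =>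
    rw [List.ofFn_succ']
    simp only [Fin.coe_castSucc, Fin.val_last, List.concat_eq_append, List.prod_append,
      List.prod_cons, List.prod_nil, mul_one]
    rw [ih, pow_succ (b * a), pow_succ a]
    generalize (b * a) ^ m = c
    generalize a ^ m = d
    group

lemma key_iff (a b : G) (m : ℕ) :
    (a * b) ^ (m + 1) = (b * a) ^ (m + 1) ↔
      a⁻¹ * b * a = (b * a) ^ m * b * ((b * a) ^ m)⁻¹ := by
  have h1 : a * (b * a) ^ m = (a * b) ^ m * a := aux_semiconj a b m
  have h2 : (b * a) * (b * a) ^ m = (b * a) ^ m * (b * a) :=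
    (Commute.self_pow (b * a) m).eq
  rw [pow_succ, pow_succ]
  constructor
  · intro h
    have h3 : a * ((b * a) ^ m * b) = (b * a) ^ m * (b * a) := by
      rw [← mul_assoc, h1, mul_assoc, h]
    have h4 : b * a * (b * a) ^ m = a * ((b * a) ^ m * b) := by
      rw [h3, ← h2]
    calc a⁻¹ * b * a = a⁻¹ * (b * a * (b * a) ^ m) * ((b * a) ^ m)⁻¹ := by group
      _ = a⁻¹ * (a * ((b * a) ^ m * b)) * ((b * a) ^ m)⁻¹ := by rw [h4]
      _ = (b * a) ^ m * b * ((b * a) ^ m)⁻¹ := by group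
  · intro h
    have h4 : b * a * (b * a) ^ m = a * ((b * a) ^ m * b) := by
      calc b * a * (b * a) ^ m = a * (a⁻¹ * b * a) * (b * a) ^ m := by group
        _ = a * ((b * a) ^ m * b * ((b * a) ^ m)⁻¹) * (b * a) ^ m := by rw [h]
        _ = a * ((b * a) ^ m * b) := by group
    calc (a * b) ^ m * (a * b) = (a * b) ^ m * a * b := by group
      _ = a * (b * a) ^ m * b := by rw [← h1]
      _ = a * ((b * a) ^ m * b) := by rw [mul_assoc]
      _ = b * a * (b * a) ^ m := h4.symm
      _ = (b * a) ^ m * (b * a) := h2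

end Aux

section PG

lemma pg_rel {α : Type*} {rels : Set (FreeGroup α)} {r : FreeGroup α} (h : r ∈ rels) :
    PresentedGroup.mk rels r = 1 := by
  change (QuotientGroup.mk r : FreeGroup α ⧸ Subgroup.normalClosure rels) = 1
  rw [QuotientGroup.eq_one_iff]
  exact Subgroup.subset_normalClosure h

lemma pg_of {α : Type*} (rels : Set (FreeGroup α)) (x : α) :
    PresentedGroup.mk rels (FreeGroup.of x) = PresentedGroup.of x := rfl

end PG

section ArtinSide

lemma artin_rel (n : ℕ) :
    ((PresentedGroup.of true : PresentedGroup (artinRels n)) * PresentedGroup.of false) ^ n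
      = (PresentedGroup.of false * PresentedGroup.of true) ^ n := by
  have h := pg_rel (rels := artinRels n) (r := (FreeGroup.of true * FreeGroup.of false) ^ n *
    ((FreeGroup.of false * FreeGroup.of true) ^ n)⁻¹) rfl
  simp only [map_mul, map_pow, map_inv, pg_of, mul_inv_eq_one] at h
  exact h

end ArtinSide

lemma pos_of_two_le {n : ℕ} (hn : 2 ≤ n) : 0 < n := by omega

section TorusSide

variable (n : ℕ) (hn : 2 ≤ n)

lemma mt_rel (i : Fin n) :
    (PresentedGroup.of none : PresentedGroup (mappingTorusRels n hn))⁻¹ *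
      PresentedGroup.of (some i) * PresentedGroup.of none
      = PresentedGroup.mk _ (phiWord n hn i) := by
  have hmem : (FreeGroup.of none)⁻¹ * FreeGroup.of (some i) * FreeGroup.of none *
      (phiWord n hn i)⁻¹ ∈ mappingTorusRels n hn := by
    rw [mappingTorusRels, Set.mem_iUnion]
    exact ⟨i, rfl⟩
  have h := pg_rel hmem
  simp only [map_mul, map_inv, pg_of, mul_inv_eq_one] at h
  exact h

lemma Y_eq : ∀ (k : ℕ) (hk : k < n),
    (PresentedGroup.of (some ⟨k, hk⟩) : PresentedGroup (mappingTorusRels n hn))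
      = (PresentedGroup.of none) ^ k * PresentedGroup.of (some ⟨0, pos_of_two_le hn⟩) *
        ((PresentedGroup.of none) ^ k)⁻¹ := by
  intro k
  induction k with
  | zero => intro hk; simp
  | succ k ih =>
    intro hk
    have hrel := mt_rel n hn ⟨k + 1, hk⟩
    rw [phiWord] at hrel
    simp only [Nat.succ_ne_zero, if_false, Nat.add_sub_cancel, pg_of] at hrel
    rw [ih (by omega)] at hrel
    have : (PresentedGroup.of (some ⟨k + 1, hk⟩) : PresentedGroup (mappingTorusRels n hn))
        = PresentedGroup.of none *
          ((PresentedGroup.of none) ^ k * PresentedGroup.of (some ⟨0, by omega⟩) *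
            ((PresentedGroup.of none) ^ k)⁻¹) * (PresentedGroup.of none)⁻¹ := by
      rw [← hrel]; group
    rw [this, pow_succ']
    group

lemma Y_eq' (i : Fin n) :
    (PresentedGroup.of (some i) : PresentedGroup (mappingTorusRels n hn))
      = (PresentedGroup.of none) ^ (i : ℕ) * PresentedGroup.of (some ⟨0, pos_of_two_le hn⟩) *
        ((PresentedGroup.of none) ^ (i : ℕ))⁻¹ := by
  have := Y_eq n hn i.1 i.2
  simpa using this

lemma M_main :
    ((PresentedGroup.of none : PresentedGroup (mappingTorusRels n hn)) *
        PresentedGroup.of (some ⟨0, pos_of_two_le hn⟩)) ^ n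
      = (PresentedGroup.of (some ⟨0, pos_of_two_le hn⟩) *
          (PresentedGroup.of none : PresentedGroup (mappingTorusRels n hn))) ^ n := by
  have h0 := mt_rel n hn ⟨0, by omega⟩
  rw [phiWord, if_pos rfl] at h0
  simp only [map_mul, map_inv, map_list_prod, List.map_map, pg_of] at h0
  have hmap : (List.finRange (n - 1)).map
      ((PresentedGroup.mk (mappingTorusRels n hn)) ∘
        (fun j : Fin (n - 1) => FreeGroup.of (some (Fin.castLE (Nat.sub_le n 1) j))))
      = List.ofFn (fun j : Fin (n - 1) =>
          (PresentedGroup.of none : PresentedGroup (mappingTorusRels n hn)) ^ (j : ℕ) *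
            PresentedGroup.of (some ⟨0, by omega⟩) *
            ((PresentedGroup.of none) ^ (j : ℕ))⁻¹) := by
    rw [List.ofFn_eq_map]
    refine List.map_congr_left (fun j _ => ?_)
    show PresentedGroup.of (some (Fin.castLE (Nat.sub_le n 1) j)) = _
    rw [Y_eq' n hn]
    simp
  rw [hmap, prod_conj_pow, Y_eq n hn (n - 1) (by omega)] at h0
  have h2 : (PresentedGroup.of none : PresentedGroup (mappingTorusRels n hn))⁻¹ *
        PresentedGroup.of (some ⟨0, by omega⟩) * PresentedGroup.of none
      = (PresentedGroup.of (some ⟨0, by omega⟩) * PresentedGroup.of none) ^ (n - 1) *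
          PresentedGroup.of (some ⟨0, by omega⟩) *
          ((PresentedGroup.of (some ⟨0, by omega⟩) * PresentedGroup.of none) ^ (n - 1))⁻¹ := by
    rw [h0]
    generalize ((PresentedGroup.of (some ⟨0, by omega⟩) :
        PresentedGroup (mappingTorusRels n hn)) * PresentedGroup.of none) ^ (n - 1) = c
    generalize ((PresentedGroup.of none : PresentedGroup (mappingTorusRels n hn))) ^ (n - 1) = d
    group
  obtain ⟨m, rfl⟩ : ∃ m, n = m + 1 := ⟨n - 1, by omega⟩
  simp only [Nat.add_sub_cancel] at h2
  exact (key_iff _ _ m).mpr h2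

end TorusSide

def Ffun (n : ℕ) (hn : 2 ≤ n) : Bool → PresentedGroup (mappingTorusRels n hn) :=
  fun b => if b then PresentedGroup.of none else PresentedGroup.of (some ⟨0, pos_of_two_le hn⟩)

def Gfun (n : ℕ) : Option (Fin n) → PresentedGroup (artinRels n) :=
  fun o => o.elim (PresentedGroup.of true)
    (fun i => (PresentedGroup.of true) ^ (i : ℕ) * PresentedGroup.of false *
      ((PresentedGroup.of true) ^ (i : ℕ))⁻¹)

@[simp] lemma Ffun_true (n : ℕ) (hn : 2 ≤ n) :
    Ffun n hn true = PresentedGroup.of none := rfl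
@[simp] lemma Ffun_false (n : ℕ) (hn : 2 ≤ n) :
    Ffun n hn false = PresentedGroup.of (some ⟨0, pos_of_two_le hn⟩) := rfl
@[simp] lemma Gfun_none (n : ℕ) : Gfun n none = PresentedGroup.of true := rfl
@[simp] lemma Gfun_some (n : ℕ) (i : Fin n) :
    Gfun n (some i) = (PresentedGroup.of true) ^ (i : ℕ) * PresentedGroup.of false *
      ((PresentedGroup.of true) ^ (i : ℕ))⁻¹ := rfl

lemma hF (n : ℕ) (hn : 2 ≤ n) : ∀ r ∈ artinRels n, FreeGroup.lift (Ffun n hn) r = 1 := by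
  intro r hr
  rw [artinRels, Set.mem_singleton_iff] at hr
  subst hr
  simp only [map_mul, map_pow, map_inv, FreeGroup.lift_apply_of, Ffun_true, Ffun_false,
    mul_inv_eq_one]
  exact M_main n hn

lemma pow_conj_aux {G : Type*} [Group G] (x y : G) (k : ℕ) :
    x⁻¹ * (x ^ (k + 1) * y * (x ^ (k + 1))⁻¹) * x = x ^ k * y * (x ^ k)⁻¹ := by
  rw [pow_succ']
  group

lemma hG (n : ℕ) (hn : 2 ≤ n) :
    ∀ r ∈ mappingTorusRels n hn, FreeGroup.lift (Gfun n) r = 1 := by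
  intro r hr
  rw [mappingTorusRels, Set.mem_iUnion] at hr
  obtain ⟨i, hi⟩ := hr
  rw [Set.mem_singleton_iff] at hi
  subst hi
  rw [map_mul, map_inv, mul_inv_eq_one, map_mul, map_mul, map_inv]
  simp only [FreeGroup.lift_apply_of, Gfun_none]
  by_cases h0 : (i : ℕ) = 0
  · rw [phiWord, if_pos h0]
    simp only [map_mul, map_inv, map_list_prod, List.map_map, FreeGroup.lift_apply_of,
      Gfun_some, h0, pow_zero, one_mul, inv_one, mul_one]
    have hmap : (List.finRange (n - 1)).map
        ((FreeGroup.lift (Gfun n)) ∘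
          (fun j : Fin (n - 1) => FreeGroup.of (some (Fin.castLE (Nat.sub_le n 1) j))))
        = List.ofFn (fun j : Fin (n - 1) =>
            (PresentedGroup.of true : PresentedGroup (artinRels n)) ^ (j : ℕ) *
              PresentedGroup.of false * ((PresentedGroup.of true) ^ (j : ℕ))⁻¹) := by
      rw [List.ofFn_eq_map]
      refine List.map_congr_left (fun j _ => ?_)
      simp [Gfun]
    rw [hmap, prod_conj_pow]
    have h2 : (PresentedGroup.of true : PresentedGroup (artinRels n))⁻¹ *
          PresentedGroup.of false * PresentedGroup.of true
        = (PresentedGroup.of false * PresentedGroup.of true) ^ (n - 1) *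
            PresentedGroup.of false *
            ((PresentedGroup.of false * PresentedGroup.of true) ^ (n - 1))⁻¹ := by
      obtain ⟨m, hm⟩ : ∃ m, n = m + 1 := ⟨n - 1, by omega⟩
      subst hm
      simp only [Nat.add_sub_cancel]
      exact (key_iff _ _ m).mp (artin_rel (m + 1))
    rw [h2]
    generalize ((PresentedGroup.of false : PresentedGroup (artinRels n)) *
      PresentedGroup.of true) ^ (n - 1) = c
    generalize ((PresentedGroup.of true : PresentedGroup (artinRels n))) ^ (n - 1) = d
    show c * _ * c⁻¹ = _
    group
  · rw [phiWord, if_neg h0]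
    simp only [FreeGroup.lift_apply_of, Gfun_some]
    show (PresentedGroup.of true : PresentedGroup (artinRels n))⁻¹ *
        ((PresentedGroup.of true) ^ (i : ℕ) * PresentedGroup.of false *
          ((PresentedGroup.of true) ^ (i : ℕ))⁻¹) * PresentedGroup.of true
      = (PresentedGroup.of true) ^ ((i : ℕ) - 1) * PresentedGroup.of false *
          ((PresentedGroup.of true) ^ ((i : ℕ) - 1))⁻¹
    obtain ⟨k, hk⟩ : ∃ k, (i : ℕ) = k + 1 := ⟨(i : ℕ) - 1, by omega⟩
    rw [hk, Nat.add_sub_cancel]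
    exact pow_conj_aux _ _ k

theorem stmt_5 (n : ℕ) (hn : 2 ≤ n) :
    ∃ e : PresentedGroup (artinRels n) ≃* PresentedGroup (mappingTorusRels n hn),
      e (PresentedGroup.of true) = PresentedGroup.of none ∧
      e (PresentedGroup.of false) = PresentedGroup.of (some ⟨0, by omega⟩) := by
  refine ⟨MonoidHom.toMulEquiv (PresentedGroup.toGroup (hF n hn))
    (PresentedGroup.toGroup (hG n hn)) ?_ ?_, ?_, ?_⟩
  · ext b
    cases b <;>
      simp [MonoidHom.comp_apply, PresentedGroup.toGroup.of, Ffun, Gfun]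
  · ext o
    cases o with
    | none =>
      simp [MonoidHom.comp_apply, PresentedGroup.toGroup.of, Ffun, Gfun]
    | some i =>
      simp only [MonoidHom.comp_apply, PresentedGroup.toGroup.of, MonoidHom.id_apply,
        Gfun_some, map_mul, map_pow, map_inv, Ffun_true, Ffun_false]
      exact (Y_eq' n hn i).symm
  · show PresentedGroup.toGroup (hF n hn) (PresentedGroup.of true) = _
    simp [Ffun]
  · show PresentedGroup.toGroup (hF n hn) (PresentedGroup.of false) = _
    simp [Ffun]
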